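/- Let A be a real n×n matrix and P a real symmetric positive definite n×n matrix with positive definite square root P₀ = √P. Then sup over nonzero x ∈ ℝⁿ of [xᵀ(PA + AᵀP)x] / (2 xᵀPx) equals (1/2) λ_max(Â + Âᵀ), where Â = P₀ A P₀⁻¹ and λ_max denotes the largest eigenvalue of the real symmetric matrix Â + Âᵀ (the weighted logarithmic norm μ_P[A]). -/

import Mathlib

open Matrix
open scoped MatrixOrder

section aux
variable {m : Type*} [Fintype m] [DecidableEq m]

lemma star_mulVec_dot (S : Matrix m m ℝ) (hS : S.IsHermitian) (y : m → ℝ) :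
    y ⬝ᵥ (S *ᵥ y) =
      ((hS.eigenvectorUnitary : Matrix m m ℝ)ᵀ *ᵥ y) ⬝ᵥ
        (diagonal hS.eigenvalues *ᵥ ((hS.eigenvectorUnitary : Matrix m m ℝ)ᵀ *ᵥ y)) := by
  set U := (hS.eigenvectorUnitary : Matrix m m ℝ) with hU
  have hstar : star U = Uᵀ := by
    rw [Matrix.star_eq_conjTranspose, conjTranspose_eq_transpose_of_trivial]
  have hdiag : (diagonal (RCLike.ofReal ∘ hS.eigenvalues) : Matrix m m ℝ)
      = diagonal hS.eigenvalues := by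
    congr 1
  conv_lhs => rw [hS.spectral_theorem, Unitary.conjStarAlgAut_apply]
  rw [hstar, hdiag, ← mulVec_mulVec, ← mulVec_mulVec, dotProduct_mulVec,
    ← mulVec_transpose]

lemma norm_sq_eq (S : Matrix m m ℝ) (hS : S.IsHermitian) (y : m → ℝ) :
    ((hS.eigenvectorUnitary : Matrix m m ℝ)ᵀ *ᵥ y) ⬝ᵥ
      ((hS.eigenvectorUnitary : Matrix m m ℝ)ᵀ *ᵥ y) = y ⬝ᵥ y := by
  set U := (hS.eigenvectorUnitary : Matrix m m ℝ) with hU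
  have hstar : star U = Uᵀ := by
    rw [Matrix.star_eq_conjTranspose, conjTranspose_eq_transpose_of_trivial]
  have hUU : U * Uᵀ = 1 := by
    have := Matrix.mem_unitaryGroup_iff.mp hS.eigenvectorUnitary.2
    rwa [hstar] at this
  calc (Uᵀ *ᵥ y) ⬝ᵥ (Uᵀ *ᵥ y) = y ⬝ᵥ (U *ᵥ (Uᵀ *ᵥ y)) := by
        rw [dotProduct_mulVec, ← mulVec_transpose, transpose_transpose, dotProduct_comm]
    _ = y ⬝ᵥ y := by rw [mulVec_mulVec, hUU, one_mulVec]

lemma quad_le [Nonempty m] (S : Matrix m m ℝ) (hS : S.IsHermitian) (y : m → ℝ) :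
    y ⬝ᵥ (S *ᵥ y) ≤ (⨆ i, hS.eigenvalues i) * (y ⬝ᵥ y) := by
  rw [star_mulVec_dot S hS y, ← norm_sq_eq S hS y]
  set z := (hS.eigenvectorUnitary : Matrix m m ℝ)ᵀ *ᵥ y
  simp only [dotProduct, mulVec_diagonal, Finset.mul_sum]
  apply Finset.sum_le_sum
  intro i _
  have h1 : hS.eigenvalues i ≤ ⨆ j, hS.eigenvalues j :=
    le_ciSup (Set.Finite.bddAbove (Set.finite_range _)) i
  have h2 : (0:ℝ) ≤ z i * z i := mul_self_nonneg _
  calc z i * (hS.eigenvalues i * z i) = hS.eigenvalues i * (z i * z i) := by ring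
    _ ≤ (⨆ j, hS.eigenvalues j) * (z i * z i) := mul_le_mul_of_nonneg_right h1 h2
    _ = (⨆ j, hS.eigenvalues j) * (z i * z i) := rfl

end aux

theorem weighted_logNorm_eq_half_lambdaMax {n : ℕ} (hn : 1 ≤ n)
    (A P : Matrix (Fin n) (Fin n) ℝ) (hP : P.PosDef) (hPsym : P.IsSymm
    ) (hH : (CFC.sqrt P * A * (CFC.sqrt P)⁻¹ +
        (CFC.sqrt P * A * (CFC.sqrt P)⁻¹)ᵀ).IsHermitian) :
    (⨆ x : {x : Fin n → ℝ // x ≠ 0},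
        (x.1 ⬝ᵥ ((P * A + Aᵀ * P) *ᵥ x.1)) / (2 * (x.1 ⬝ᵥ (P *ᵥ x.1)))) =
      (1 / 2) * ⨆ i, hH.eigenvalues i := by
  haveI : NeZero n := ⟨by omega⟩
  set P₀ := CFC.sqrt P with hP₀
  set S := P₀ * A * P₀⁻¹ + (P₀ * A * P₀⁻¹)ᵀ with hS
  -- basic facts
  have hP₀mul : P₀ * P₀ = P := CFC.sqrt_mul_sqrt_self P hP.posSemidef.nonneg
  have hP₀sym : P₀ᵀ = P₀ := by
    have := (CFC.sqrt_nonneg P).posSemidef.1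
    rwa [Matrix.IsHermitian, conjTranspose_eq_transpose_of_trivial] at this
  have hdet : IsUnit P₀.det := by
    have hPdet : (0:ℝ) < P.det := hP.det_pos
    rw [← hP₀mul, det_mul] at hPdet
    have : P₀.det ≠ 0 := by intro h; rw [h] at hPdet; simp at hPdet
    exact isUnit_iff_ne_zero.mpr this
  have hinv : P₀ * P₀⁻¹ = 1 := mul_nonsing_inv _ hdet
  have hinv' : P₀⁻¹ * P₀ = 1 := nonsing_inv_mul _ hdet
  -- key algebra: P₀ * S * P₀ = P * A + Aᵀ * P
  have hkey : P₀ * S * P₀ = P * A + Aᵀ * P := by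
    have h1 : P₀ * (P₀ * A * P₀⁻¹) * P₀ = P * A := by
      calc P₀ * (P₀ * A * P₀⁻¹) * P₀ = (P₀ * P₀) * A * (P₀⁻¹ * P₀) := by
            noncomm_ring
        _ = P * A := by rw [hP₀mul, hinv', mul_one]
    have h2 : P₀ * (P₀ * A * P₀⁻¹)ᵀ * P₀ = Aᵀ * P := by
      have ht : (P₀ * A * P₀⁻¹)ᵀ = (P₀⁻¹) * Aᵀ * P₀ := by
        rw [transpose_mul, transpose_mul, transpose_nonsing_inv, hP₀sym]
        noncomm_ring
      calc P₀ * (P₀ * A * P₀⁻¹)ᵀ * P₀ = (P₀ * P₀⁻¹) * Aᵀ * (P₀ * P₀) := by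
            rw [ht]; noncomm_ring
        _ = Aᵀ * P := by rw [hP₀mul, hinv, one_mul]
    rw [hS, mul_add, add_mul, h1, h2]
  -- quadratic form transfer
  have hquad : ∀ x : Fin n → ℝ,
      x ⬝ᵥ ((P * A + Aᵀ * P) *ᵥ x) = (P₀ *ᵥ x) ⬝ᵥ (S *ᵥ (P₀ *ᵥ x)) := by
    intro x
    rw [← hkey, ← mulVec_mulVec, ← mulVec_mulVec, dotProduct_mulVec,
      ← mulVec_transpose, hP₀sym]
  have hquadP : ∀ x : Fin n → ℝ,
      x ⬝ᵥ (P *ᵥ x) = (P₀ *ᵥ x) ⬝ᵥ (P₀ *ᵥ x) := by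
    intro x
    rw [← hP₀mul, ← mulVec_mulVec, dotProduct_mulVec, ← mulVec_transpose, hP₀sym]
  set lam := ⨆ i, hH.eigenvalues i with hlam
  -- upper bound
  have hub : ∀ x : {x : Fin n → ℝ // x ≠ 0},
      (x.1 ⬝ᵥ ((P * A + Aᵀ * P) *ᵥ x.1)) / (2 * (x.1 ⬝ᵥ (P *ᵥ x.1))) ≤ (1/2) * lam := by
    rintro ⟨x, hx⟩
    have hpos : 0 < x ⬝ᵥ (P *ᵥ x) := by
      have := hP.dotProduct_mulVec_pos hx
      simpa [dotProduct, mulVec, Finset.mul_sum] using this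
    rw [div_le_iff₀ (by positivity)]
    have := quad_le S hH (P₀ *ᵥ x)
    rw [hquad x, hquadP x] at *
    calc (P₀ *ᵥ x) ⬝ᵥ (S *ᵥ (P₀ *ᵥ x)) ≤ lam * ((P₀ *ᵥ x) ⬝ᵥ (P₀ *ᵥ x)) := this
      _ = 1 / 2 * lam * (2 * ((P₀ *ᵥ x) ⬝ᵥ (P₀ *ᵥ x))) := by ring
  -- attainment
  obtain ⟨i₀, hi₀⟩ : ∃ i₀ : Fin n, hH.eigenvalues i₀ = lam := by
    obtain ⟨i₀, hi₀⟩ := Finite.exists_max hH.eigenvalues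
    refine ⟨i₀, le_antisymm (le_ciSup (Set.Finite.bddAbove (Set.finite_range _)) i₀) ?_⟩
    exact ciSup_le hi₀
  set v : Fin n → ℝ := ⇑(hH.eigenvectorBasis i₀) with hv
  have hvne : v ≠ 0 := by
    have := hH.eigenvectorBasis.orthonormal.ne_zero i₀
    intro h
    apply this
    ext j
    exact congrFun h j
  have hSv : S *ᵥ v = lam • v := by rw [hH.mulVec_eigenvectorBasis i₀, hi₀]
  set x₀ : Fin n → ℝ := P₀⁻¹ *ᵥ v with hx₀
  have hP₀x₀ : P₀ *ᵥ x₀ = v := by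
    rw [hx₀, mulVec_mulVec, hinv, one_mulVec]
  have hx₀ne : x₀ ≠ 0 := by
    intro h
    apply hvne
    rw [← hP₀x₀, h, mulVec_zero]
  have hvv : 0 < v ⬝ᵥ v := by
    have h0 : 0 ≤ v ⬝ᵥ v := by
      simpa [dotProduct] using Finset.sum_nonneg (fun i _ => mul_self_nonneg (v i))
    have h1 : v ⬝ᵥ v ≠ 0 := fun h => hvne (dotProduct_self_eq_zero.mp h)
    exact lt_of_le_of_ne h0 (Ne.symm h1)
  have hattain : (x₀ ⬝ᵥ ((P * A + Aᵀ * P) *ᵥ x₀)) / (2 * (x₀ ⬝ᵥ (P *ᵥ x₀)))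
      = (1/2) * lam := by
    rw [hquad x₀, hquadP x₀, hP₀x₀, hSv]
    rw [dotProduct_smul]
    field_simp
    ring
  haveI : Nonempty {x : Fin n → ℝ // x ≠ 0} := ⟨⟨x₀, hx₀ne⟩⟩
  apply le_antisymm
  · exact ciSup_le hub
  · rw [← hattain]
    exact le_ciSup ⟨(1/2) * lam, fun y ⟨x, hx⟩ => hx ▸ hub x⟩ ⟨x₀, hx₀ne⟩
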